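/- For n ≥ 3, the function 𝓕 : (-1,∞) × ℝ^{n-1} → ℝ defined by 𝓕(s,z) = (1+s)^{n-1} √(1 + |z|²/(1+s)²) is convex on some neighborhood of the origin (0,0) ∈ ℝ × ℝ^{n-1}. -/

import Mathlib

set_option maxHeartbeats 1000000

/-- The perimeter integrand `𝓕(s,z) = (1+s)^{n-1} √(1 + |z|²/(1+s)²)`,
viewed as a function on `ℝ × ℝ^{n-1}`. -/
noncomputable def perimIntegrand (n : ℕ) (p : ℝ × EuclideanSpace ℝ (Fin (n - 1))) : ℝ :=
  (1 + p.1) ^ (n - 1) * Real.sqrt (1 + ‖p.2‖ ^ 2 / (1 + p.1) ^ 2)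

open Real Set

lemma F_nonneg (M u b Q p e : ℝ) (hM : 1 ≤ M) (hu1 : 7/8 ≤ u) (hu2 : u ≤ 9/8)
    (hQ0 : 0 ≤ Q) (he : 0 ≤ e) (hp : p^2 ≤ Q*e) (hMQ : M^2*Q ≤ 1/64) :
    0 ≤ M*(M-1)*b^2*(u^2+Q)^2 + 2*M*b*u*(u*b+p)*(u^2+Q)
      + u^2*((b^2+e)*(u^2+Q) - (u*b+p)^2) := by
  obtain ⟨A, hA⟩ : ∃ A : ℝ, A = M*(M-1)*(u^2+Q)^2 + 2*M*u^2*(u^2+Q) + u^2*Q := ⟨_, rfl⟩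
  obtain ⟨C, hC⟩ : ∃ C : ℝ, C = (M-1)*u^2 + M*Q := ⟨_, rfl⟩
  have hM1 : 0 ≤ M - 1 := by linarith
  have hM0 : 0 < M := by linarith
  have hu0 : 0 < u := by linarith
  have husql : (49/64 : ℝ) ≤ u^2 := by nlinarith
  have husqh : u^2 ≤ (81/64 : ℝ) := by nlinarith
  have hM21 : 0 ≤ M^2 - 1 := by nlinarith
  have hQsmall : Q ≤ 1/64 := by
    have := mul_nonneg hM21 hQ0
    nlinarith
  have hFform : M*(M-1)*b^2*(u^2+Q)^2 + 2*M*b*u*(u*b+p)*(u^2+Q)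
      + u^2*((b^2+e)*(u^2+Q) - (u*b+p)^2)
      = A*b^2 + 2*C*u*b*p + e*u^4 + u^2*(e*Q - p^2) := by rw [hA, hC]; ring
  rw [hFform]
  have ht1 : 0 ≤ M*(M-1)*(u^2+Q)^2 := mul_nonneg (mul_nonneg hM0.le hM1) (sq_nonneg _)
  have ht2 : (49/64 : ℝ)*(49/64) ≤ u^2*(u^2+Q) :=
    mul_le_mul husql (by linarith) (by norm_num) (by positivity)
  have ht2' : 2*((49/64 : ℝ)*(49/64)) ≤ 2*M*(u^2*(u^2+Q)) := by
    have h1 : (1:ℝ)*((49/64)*(49/64)) ≤ M*(u^2*(u^2+Q)) :=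
      mul_le_mul hM ht2 (by norm_num) hM0.le
    linarith
  have ht4 : 0 ≤ u^2*Q := by positivity
  have hApos : 0 < A := by rw [hA]; nlinarith [ht1, ht2', ht4]
  have hC0 : 0 ≤ C := by
    rw [hC]
    have := mul_nonneg hM1 (sq_nonneg u)
    have := mul_nonneg hM0.le hQ0
    linarith
  have hCle : C ≤ (82/64)*M := by
    rw [hC]
    have h1 : (M-1)*u^2 ≤ (M-1)*(81/64) := mul_le_mul_of_nonneg_left husqh hM1
    have h2 : M*Q ≤ M*(1/64) := mul_le_mul_of_nonneg_left hQsmall hM0.le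
    linarith
  have hdisc : C^2*Q ≤ A*u^2 := by
    have hC2 : C^2 ≤ ((82/64)*M)^2 := pow_le_pow_left₀ hC0 hCle 2
    have hC2Q : C^2*Q ≤ ((82/64)*M)^2*Q := mul_le_mul_of_nonneg_right hC2 hQ0
    have e1 : ((82/64:ℝ)*M)^2*Q = (82/64)^2*(M^2*Q) := by ring
    have hC2Q' : C^2*Q ≤ (82/64)^2*(1/64) := by
      rw [e1] at hC2Q
      linarith [hMQ]
    have h4 : (49/64:ℝ)*(49/64) ≤ u^2*u^2 := mul_le_mul husql husql (by norm_num) (by positivity)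
    have hu6 : (117649/262144 : ℝ) ≤ u^2*(u^2*u^2) := by
      linarith [mul_le_mul husql h4 (by norm_num : (0:ℝ) ≤ 49/64*(49/64)) (by positivity : (0:ℝ) ≤ u^2)]
    have hAu : 2*M*(u^2*(u^2*u^2)) ≤ A*u^2 := by
      rw [hA]
      have s1 : 0 ≤ M*(M-1)*(u^2+Q)^2*u^2 := mul_nonneg ht1 (sq_nonneg u)
      have s2 : 0 ≤ 2*M*(u^2*u^2)*Q := by positivity
      have s3 : 0 ≤ u^2*Q*u^2 := by positivity
      nlinarith [s1, s2, s3]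
    have hMu6 : (1:ℝ)*(u^2*(u^2*u^2)) ≤ M*(u^2*(u^2*u^2)) :=
      mul_le_mul_of_nonneg_right hM (by positivity)
    have : (117649/131072 : ℝ) ≤ A*u^2 := by linarith
    linarith
  rcases eq_or_lt_of_le hQ0 with hQe | hQpos
  · have hp0 : p^2 ≤ 0 := by
      have : Q*e = 0 := by rw [← hQe]; ring
      linarith [hp, this.le]
    have hp0' : p = 0 := by nlinarith [sq_nonneg p]
    rw [hp0', ← hQe]
    have k1 : 0 ≤ A*b^2 := mul_nonneg hApos.le (sq_nonneg b)
    have k2 : 0 ≤ e*u^4 := by positivity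
    have k3 : 0 ≤ u^2*(0:ℝ) := by norm_num
    nlinarith [k1, k2]
  · have hpeQ : p^2 ≤ e*Q := by nlinarith
    obtain ⟨T, hT⟩ : ∃ T : ℝ, T = A*b^2 + 2*C*u*b*p + e*u^4 + u^2*(e*Q - p^2) := ⟨_, rfl⟩
    have m1 : C^2*u^2*Q^2*p^2 ≤ C^2*u^2*Q^2*(e*Q) :=
      mul_le_mul_of_nonneg_left hpeQ (by positivity)
    have m2 : C^2*u^2*Q^2*(e*Q) ≤ A*e*u^4*Q^2 := by
      have h := mul_le_mul_of_nonneg_right hdisc (by positivity : (0:ℝ) ≤ e*u^2*Q^2)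
      nlinarith [h]
    have m3 : 0 ≤ A*Q*(u^2*Q)*(e*Q - p^2) := by
      have h1 : 0 ≤ e*Q - p^2 := by linarith
      positivity
    have expand : (A*Q) * (T*Q) = (A*Q*b + C*u*Q*p)^2 + (A*e*u^4*Q^2 - C^2*u^2*Q^2*p^2)
        + A*Q*(u^2*Q)*(e*Q - p^2) := by rw [hT]; ring
    have hAQ : 0 < A*Q := mul_pos hApos hQpos
    have hTQ : 0 ≤ T*Q := by
      have h0 : 0 ≤ (A*Q) * (T*Q) := by
        rw [expand]
        linarith [sq_nonneg (A*Q*b + C*u*Q*p), m1, m2, m3]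
      exact nonneg_of_mul_nonneg_right h0 hAQ
    have := (mul_nonneg_iff_of_pos_right hQpos).mp hTQ
    linarith [hT ▸ this]

lemma convexOn_congr' {s : Set ℝ} {f g : ℝ → ℝ} (hf : ConvexOn ℝ s f)
    (h : ∀ x ∈ s, f x = g x) : ConvexOn ℝ s g := by
  refine ⟨hf.1, fun x hx y hy a b ha hb hab => ?_⟩
  rw [← h _ (hf.1 hx hy ha hb hab), ← h x hx, ← h y hy]
  exact hf.2 hx hy ha hb hab

lemma convexOn_of_segments {E : Type*} [AddCommGroup E] [Module ℝ E] {s : Set E}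
    (hs : Convex ℝ s) {f : E → ℝ}
    (h : ∀ x ∈ s, ∀ y ∈ s, ConvexOn ℝ (Icc (0:ℝ) 1) fun t => f (x + t • (y - x))) :
    ConvexOn ℝ s f := by
  refine ⟨hs, fun x hx y hy a b ha hb hab => ?_⟩
  have h2 := (h x hx y hy).2 (x := 0) (y := 1) (by simp) (by simp [mem_Icc]) ha hb hab
  have e0 : x + ((a*0+b*1) : ℝ) • (y - x) = a • x + b • y := by
    have : a = 1 - b := by linarith
    rw [this]; simp [smul_sub, sub_smul, one_smul]; abel
  have e1 : x + (0:ℝ) • (y - x) = x := by simp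
  have e2 : x + (1:ℝ) • (y - x) = y := by simp
  simp only [smul_eq_mul] at h2
  rw [e0, e1, e2] at h2
  exact h2

lemma convexOn_aux (m : ℕ) (hm : 1 ≤ m) (a b c d e : ℝ)
    (hc : 0 ≤ c) (he : 0 ≤ e) (hcs : d^2 ≤ c*e)
    (hu1 : ∀ t ∈ Icc (0:ℝ) 1, 7/8 ≤ a + b*t) (hu2 : ∀ t ∈ Icc (0:ℝ) 1, a + b*t ≤ 9/8)
    (hQb : ∀ t ∈ Icc (0:ℝ) 1, ((m:ℝ))^2 * (c + 2*d*t + e*t^2) ≤ 1/64) :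
    ConvexOn ℝ (Icc (0:ℝ) 1)
      (fun t => (a+b*t)^m * Real.sqrt ((a+b*t)^2 + (c + 2*d*t + e*t^2))) := by
  -- basic positivity facts
  have hQnn : ∀ t : ℝ, 0 ≤ c + 2*d*t + e*t^2 := by
    intro t
    rcases eq_or_lt_of_le he with he0 | hepos
    · have hd : d = 0 := by nlinarith [sq_nonneg d]
      rw [hd, ← he0]; simpa using hc
    · nlinarith [sq_nonneg (d + e*t), hcs]
  have hRpos : ∀ t : ℝ, 0 < a + b*t → 0 < (a+b*t)^2 + (c + 2*d*t + e*t^2) := by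
    intro t ht
    have := hQnn t
    positivity
  -- derivative building blocks
  have hu : ∀ t : ℝ, HasDerivAt (fun s => a + b*s) b t := by
    intro t
    simpa using ((hasDerivAt_id t).const_mul b).const_add a
  have hR : ∀ t : ℝ, HasDerivAt (fun s => (a+b*s)^2 + (c + 2*d*s + e*s^2))
      (2*(a+b*t)*b + (2*d + 2*e*t)) t := by
    intro t
    have h1 := (hu t).pow 2
    have h2 : HasDerivAt (fun s : ℝ => c + 2*d*s + e*s^2) (2*d + 2*e*t) t := by
      have ha : HasDerivAt (fun s : ℝ => c + 2*d*s) (2*d) t := by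
        simpa using ((hasDerivAt_id t).const_mul (2*d)).const_add c
      have hb : HasDerivAt (fun s : ℝ => e*s^2) (e*(2*t)) t := by
        simpa using (hasDerivAt_pow 2 t).const_mul e
      have := ha.add hb
      refine this.congr_deriv ?_; ring
    have := h1.add h2
    refine this.congr_deriv ?_
    ring
  have hW : ∀ t : ℝ, 0 < a + b*t →
      HasDerivAt (fun s => Real.sqrt ((a+b*s)^2 + (c + 2*d*s + e*s^2)))
        ((2*(a+b*t)*b + (2*d + 2*e*t)) / (2*Real.sqrt ((a+b*t)^2 + (c + 2*d*t + e*t^2)))) t := by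
    intro t ht
    exact (hR t).sqrt (ne_of_gt (hRpos t ht))
  -- first derivative
  have hG : ∀ t : ℝ, 0 < a + b*t →
      HasDerivAt (fun s => (a+b*s)^m * Real.sqrt ((a+b*s)^2 + (c + 2*d*s + e*s^2)))
        ((m:ℝ)*b*(a+b*t)^(m-1)*Real.sqrt ((a+b*t)^2 + (c + 2*d*t + e*t^2))
          + (a+b*t)^m * ((2*(a+b*t)*b + (2*d + 2*e*t))
              / (2*Real.sqrt ((a+b*t)^2 + (c + 2*d*t + e*t^2))))) t := by
    intro t ht
    have := ((hu t).pow m).mul (hW t ht)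
    refine this.congr_deriv ?_
    simp only [Pi.pow_apply]
    ring
  -- second derivative
  have hG1 : ∀ t : ℝ, 0 < a + b*t →
      HasDerivAt (fun s => (m:ℝ)*b*(a+b*s)^(m-1)*Real.sqrt ((a+b*s)^2 + (c + 2*d*s + e*s^2))
          + (a+b*s)^m * ((2*(a+b*s)*b + (2*d + 2*e*s))
              / (2*Real.sqrt ((a+b*s)^2 + (c + 2*d*s + e*s^2)))))
        ((m:ℝ)*((m:ℝ)-1)*b^2*(a+b*t)^(m-2)*Real.sqrt ((a+b*t)^2 + (c + 2*d*t + e*t^2))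
          + (m:ℝ)*b*(a+b*t)^(m-1)*((2*(a+b*t)*b + (2*d + 2*e*t))
              / Real.sqrt ((a+b*t)^2 + (c + 2*d*t + e*t^2)))
          + (a+b*t)^m * ((2*(2*b^2+2*e)*(Real.sqrt ((a+b*t)^2 + (c + 2*d*t + e*t^2)))^2
                - (2*(a+b*t)*b + (2*d + 2*e*t))^2)
              / (4*(Real.sqrt ((a+b*t)^2 + (c + 2*d*t + e*t^2)))^3))) t := by
    intro t ht
    have hWpos : 0 < Real.sqrt ((a+b*t)^2 + (c + 2*d*t + e*t^2)) :=
      Real.sqrt_pos.2 (hRpos t ht)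
    have hWne : Real.sqrt ((a+b*t)^2 + (c + 2*d*t + e*t^2)) ≠ 0 := ne_of_gt hWpos
    have hT1 := (((hu t).pow (m-1)).const_mul ((m:ℝ)*b)).mul (hW t ht)
    have hRp : HasDerivAt (fun s : ℝ => 2*(a+b*s)*b + (2*d + 2*e*s)) (2*b*b + 2*e) t := by
      have h1 := ((hu t).const_mul 2).mul_const b
      have h2 : HasDerivAt (fun s : ℝ => 2*d + 2*e*s) (2*e) t := by
        simpa using ((hasDerivAt_id t).const_mul (2*e)).const_add (2*d)
      exact h1.add h2
    have hden : HasDerivAt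
        (fun s => 2*Real.sqrt ((a+b*s)^2 + (c + 2*d*s + e*s^2)))
        (2*((2*(a+b*t)*b + (2*d + 2*e*t))
          / (2*Real.sqrt ((a+b*t)^2 + (c + 2*d*t + e*t^2))))) t := (hW t ht).const_mul 2
    have hdiv := hRp.div hden (by positivity)
    have hT2 := ((hu t).pow m).mul hdiv
    have htot := hT1.add hT2
    refine htot.congr_deriv ?_
    simp only [Pi.pow_apply, Pi.div_apply, Pi.mul_apply]
    have hsub : m - 1 - 1 = m - 2 := by omega
    rw [hsub]
    simp only [Nat.cast_sub hm, Nat.cast_one]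
    generalize hS : Real.sqrt ((a+b*t)^2 + (c + 2*d*t + e*t^2)) = S at hWne ⊢
    generalize hU : a+b*t = U
    field_simp
    ring
  -- nonnegativity of the second derivative expression
  have hG2nn : ∀ t ∈ Icc (0:ℝ) 1,
      0 ≤ (m:ℝ)*((m:ℝ)-1)*b^2*(a+b*t)^(m-2)*Real.sqrt ((a+b*t)^2 + (c + 2*d*t + e*t^2))
          + (m:ℝ)*b*(a+b*t)^(m-1)*((2*(a+b*t)*b + (2*d + 2*e*t))
              / Real.sqrt ((a+b*t)^2 + (c + 2*d*t + e*t^2)))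
          + (a+b*t)^m * ((2*(2*b^2+2*e)*(Real.sqrt ((a+b*t)^2 + (c + 2*d*t + e*t^2)))^2
                - (2*(a+b*t)*b + (2*d + 2*e*t))^2)
              / (4*(Real.sqrt ((a+b*t)^2 + (c + 2*d*t + e*t^2)))^3)) := by
    intro t htI
    have h71 : 7/8 ≤ a + b*t := hu1 t htI
    have h98 : a + b*t ≤ 9/8 := hu2 t htI
    have hupos : 0 < a + b*t := by linarith
    have hRtpos := hRpos t hupos
    have hM1 : (1:ℝ) ≤ (m:ℝ) := by exact_mod_cast hm
    have hpQ : (d+e*t)^2 ≤ (c + 2*d*t + e*t^2)*e := by nlinarith [hcs]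
    have hF := F_nonneg (m:ℝ) (a+b*t) b (c + 2*d*t + e*t^2) (d+e*t) e
      hM1 h71 h98 (hQnn t) he hpQ (hQb t htI)
    set U := a + b*t with hU
    set W := Real.sqrt (U^2 + (c + 2*d*t + e*t^2)) with hWdef
    have hWsq : W^2 = U^2 + (c + 2*d*t + e*t^2) := Real.sq_sqrt (le_of_lt hRtpos)
    have hWpos : 0 < W := Real.sqrt_pos.2 hRtpos
    have hFw : 0 ≤ (m:ℝ)*((m:ℝ)-1)*b^2*(W^2)^2
        + 2*(m:ℝ)*b*U*(U*b+(d+e*t))*W^2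
        + U^2*((b^2+e)*W^2 - (U*b+(d+e*t))^2) := by
      have eqq : (m:ℝ)*((m:ℝ)-1)*b^2*(W^2)^2
          + 2*(m:ℝ)*b*U*(U*b+(d+e*t))*W^2
          + U^2*((b^2+e)*W^2 - (U*b+(d+e*t))^2)
          = (m:ℝ)*((m:ℝ)-1)*b^2*(U^2+(c + 2*d*t + e*t^2))^2
          + 2*(m:ℝ)*b*U*(U*b+(d+e*t))*(U^2+(c + 2*d*t + e*t^2))
          + U^2*((b^2+e)*(U^2+(c + 2*d*t + e*t^2)) - (U*b+(d+e*t))^2) := by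
        linear_combination ((m:ℝ)*((m:ℝ)-1)*b^2*(W^2+U^2+(c + 2*d*t + e*t^2))
          + 2*(m:ℝ)*b*U*(U*b+(d+e*t)) + U^2*(b^2+e)) * hWsq
      rw [eqq]
      exact hF
    have h4pos : 0 < 4*W^3*U := by positivity
    have hkey : ((m:ℝ)*((m:ℝ)-1)*b^2*U^(m-2)*W
          + (m:ℝ)*b*U^(m-1)*((2*U*b + (2*d + 2*e*t)) / W)
          + U^m * ((2*(2*b^2+2*e)*W^2 - (2*U*b + (2*d + 2*e*t))^2) / (4*W^3)))
          * (4*W^3*U)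
        = U^(m-1) * (4*((m:ℝ)*((m:ℝ)-1)*b^2*(W^2)^2
            + 2*(m:ℝ)*b*U*(U*b+(d+e*t))*W^2
            + U^2*((b^2+e)*W^2 - (U*b+(d+e*t))^2))) := by
      have hWne : W ≠ 0 := ne_of_gt hWpos
      rcases m with _ | m0
      · omega
      · rcases m0 with _ | j
        · norm_num
          field_simp
          ring
        · have e1 : j + 1 + 1 - 1 = j + 1 := by omega
          have e2 : j + 1 + 1 - 2 = j := by omega
          rw [e1, e2]
          push_cast
          field_simp
          ring
    have hnn : 0 ≤ ((m:ℝ)*((m:ℝ)-1)*b^2*U^(m-2)*W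
          + (m:ℝ)*b*U^(m-1)*((2*U*b + (2*d + 2*e*t)) / W)
          + U^m * ((2*(2*b^2+2*e)*W^2 - (2*U*b + (2*d + 2*e*t))^2) / (4*W^3)))
          * (4*W^3*U) := by
      rw [hkey]
      exact mul_nonneg (by positivity) (by linarith [hFw])
    exact (mul_nonneg_iff_of_pos_right h4pos).mp hnn
  -- assemble
  have hcontu : Continuous fun s : ℝ => a + b*s := by continuity
  have hcontR : Continuous fun s : ℝ => (a+b*s)^2 + (c + 2*d*s + e*s^2) := by continuity
  refine convexOn_of_deriv2_nonneg (convex_Icc 0 1) ?_ ?_ ?_ ?_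
  · exact ((hcontu.pow m).mul (Real.continuous_sqrt.comp hcontR)).continuousOn
  · rw [interior_Icc]
    intro t ht
    have hupos : 0 < a + b*t := by
      have := hu1 t (Ioo_subset_Icc_self ht); linarith
    exact (hG t hupos).differentiableAt.differentiableWithinAt
  · rw [interior_Icc]
    intro t ht
    have hupos : 0 < a + b*t := by
      have := hu1 t (Ioo_subset_Icc_self ht); linarith
    have hnb : {s : ℝ | 0 < a + b*s} ∈ nhds t :=
      (isOpen_lt continuous_const hcontu).mem_nhds hupos
    have hev : (deriv fun s => (a+b*s)^m * Real.sqrt ((a+b*s)^2 + (c + 2*d*s + e*s^2)))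
        =ᶠ[nhds t] (fun s => (m:ℝ)*b*(a+b*s)^(m-1)*Real.sqrt ((a+b*s)^2 + (c + 2*d*s + e*s^2))
          + (a+b*s)^m * ((2*(a+b*s)*b + (2*d + 2*e*s))
              / (2*Real.sqrt ((a+b*s)^2 + (c + 2*d*s + e*s^2))))) :=
      Filter.eventually_of_mem hnb (fun s hs => (hG s hs).deriv)
    exact ((hG1 t hupos).differentiableAt.congr_of_eventuallyEq hev).differentiableWithinAt
  · rw [interior_Icc]
    intro t ht
    have hupos : 0 < a + b*t := by
      have := hu1 t (Ioo_subset_Icc_self ht); linarith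
    have hnb : {s : ℝ | 0 < a + b*s} ∈ nhds t :=
      (isOpen_lt continuous_const hcontu).mem_nhds hupos
    have hev : (deriv fun s => (a+b*s)^m * Real.sqrt ((a+b*s)^2 + (c + 2*d*s + e*s^2)))
        =ᶠ[nhds t] (fun s => (m:ℝ)*b*(a+b*s)^(m-1)*Real.sqrt ((a+b*s)^2 + (c + 2*d*s + e*s^2))
          + (a+b*s)^m * ((2*(a+b*s)*b + (2*d + 2*e*s))
              / (2*Real.sqrt ((a+b*s)^2 + (c + 2*d*s + e*s^2))))) :=
      Filter.eventually_of_mem hnb (fun s hs => (hG s hs).deriv)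
    have h2 : deriv^[2] (fun s => (a+b*s)^m * Real.sqrt ((a+b*s)^2 + (c + 2*d*s + e*s^2))) t
        = deriv (deriv fun s => (a+b*s)^m * Real.sqrt ((a+b*s)^2 + (c + 2*d*s + e*s^2))) t := by
      rw [Function.iterate_succ_apply', Function.iterate_one]
    rw [h2, hev.deriv_eq, (hG1 t hupos).deriv]
    exact hG2nn t (Ioo_subset_Icc_self ht)

theorem stmt_7 (n : ℕ) (hn : 3 ≤ n) :
    ∃ δ > (0 : ℝ),
      ConvexOn ℝ (Metric.ball (0 : ℝ × EuclideanSpace ℝ (Fin (n - 1))) δ)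
        (perimIntegrand n) := by
  have hnR : (3:ℝ) ≤ (n:ℝ) := by exact_mod_cast hn
  set m := n - 2 with hm_def
  have hm : 1 ≤ m := by omega
  have hmR : (m:ℝ) = (n:ℝ) - 2 := by
    rw [hm_def]; push_cast [Nat.cast_sub (by omega : 2 ≤ n)]; ring
  set δ : ℝ := 1/(8*(n:ℝ)) with hδ
  have hδpos : 0 < δ := by rw [hδ]; positivity
  have hδsmall : δ ≤ 1/24 := by
    rw [hδ, div_le_div_iff₀ (by positivity) (by norm_num)]
    linarith
  refine ⟨δ, hδpos, ?_⟩
  apply convexOn_of_segments (convex_ball _ _)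
  intro x hx y hy
  have hx' : max ‖x.1‖ ‖x.2‖ < δ := by
    rw [Metric.mem_ball, dist_zero_right, Prod.norm_def] at hx
    exact hx
  have hy' : max ‖y.1‖ ‖y.2‖ < δ := by
    rw [Metric.mem_ball, dist_zero_right, Prod.norm_def] at hy
    exact hy
  have hx1 : |x.1| < δ := by
    have := lt_of_le_of_lt (le_max_left ‖x.1‖ ‖x.2‖) hx'
    rwa [Real.norm_eq_abs] at this
  have hx2 : ‖x.2‖ < δ := lt_of_le_of_lt (le_max_right _ _) hx'
  have hy1 : |y.1| < δ := by
    have := lt_of_le_of_lt (le_max_left ‖y.1‖ ‖y.2‖) hy'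
    rwa [Real.norm_eq_abs] at this
  have hy2 : ‖y.2‖ < δ := lt_of_le_of_lt (le_max_right _ _) hy'
  obtain ⟨hx1a, hx1b⟩ := abs_lt.mp hx1
  obtain ⟨hy1a, hy1b⟩ := abs_lt.mp hy1
  -- parameters
  set v : EuclideanSpace ℝ (Fin (n-1)) := y.2 - x.2 with hv
  have hc : 0 ≤ ‖x.2‖^2 := by positivity
  have he : 0 ≤ ‖v‖^2 := by positivity
  have hcs : (inner ℝ x.2 v : ℝ)^2 ≤ ‖x.2‖^2 * ‖v‖^2 := by
    have h := real_inner_mul_inner_self_le x.2 v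
    have e1 : (inner ℝ x.2 x.2 : ℝ) = ‖x.2‖^2 := real_inner_self_eq_norm_sq x.2
    have e2 : (inner ℝ v v : ℝ) = ‖v‖^2 := real_inner_self_eq_norm_sq v
    rw [e1, e2] at h
    nlinarith [h]
  have hQeq : ∀ t : ℝ, ‖x.2‖^2 + 2*(inner ℝ x.2 v : ℝ)*t + ‖v‖^2*t^2 = ‖x.2 + t•v‖^2 := by
    intro t
    rw [norm_add_sq_real, real_inner_smul_right, norm_smul, Real.norm_eq_abs, mul_pow, sq_abs]
    ring
  have hu1 : ∀ t ∈ Icc (0:ℝ) 1, 7/8 ≤ (1+x.1) + (y.1-x.1)*t := by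
    rintro t ⟨ht0, ht1⟩
    nlinarith [mul_nonneg (by linarith : (0:ℝ) ≤ 1-t) (by linarith : 0 ≤ x.1+δ),
      mul_nonneg ht0 (by linarith : 0 ≤ y.1+δ)]
  have hu2 : ∀ t ∈ Icc (0:ℝ) 1, (1+x.1) + (y.1-x.1)*t ≤ 9/8 := by
    rintro t ⟨ht0, ht1⟩
    nlinarith [mul_nonneg (by linarith : (0:ℝ) ≤ 1-t) (by linarith : 0 ≤ δ-x.1),
      mul_nonneg ht0 (by linarith : 0 ≤ δ-y.1)]
  have hQb : ∀ t ∈ Icc (0:ℝ) 1,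
      ((m:ℝ))^2 * (‖x.2‖^2 + 2*(inner ℝ x.2 v : ℝ)*t + ‖v‖^2*t^2) ≤ 1/64 := by
    rintro t ⟨ht0, ht1⟩
    have hsplit : x.2 + t•v = (1-t)•x.2 + t•y.2 := by
      rw [hv, smul_sub, sub_smul, one_smul]; abel
    have hnormle : ‖x.2 + t•v‖ ≤ δ := by
      rw [hsplit]
      calc ‖(1-t)•x.2 + t•y.2‖ ≤ ‖(1-t)•x.2‖ + ‖t•y.2‖ := norm_add_le _ _
        _ = (1-t)*‖x.2‖ + t*‖y.2‖ := by
            rw [norm_smul, norm_smul, Real.norm_eq_abs, Real.norm_eq_abs,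
              abs_of_nonneg (by linarith : (0:ℝ) ≤ 1-t), abs_of_nonneg ht0]
        _ ≤ (1-t)*δ + t*δ := by
            have := mul_le_mul_of_nonneg_left hx2.le (by linarith : (0:ℝ) ≤ 1-t)
            have := mul_le_mul_of_nonneg_left hy2.le ht0
            linarith
        _ = δ := by ring
    have hQle : ‖x.2 + t•v‖^2 ≤ δ^2 := by nlinarith [norm_nonneg (x.2 + t•v)]
    rw [hQeq t]
    have hmn : (m:ℝ) ≤ (n:ℝ) := by rw [hmR]; linarith
    have hm0 : (0:ℝ) ≤ (m:ℝ) := by positivity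
    have hδ2 : (m:ℝ)^2 * δ^2 ≤ 1/64 := by
      rw [hδ]
      have h1 : (m:ℝ)^2 ≤ (n:ℝ)^2 := by nlinarith
      have h2 : (m:ℝ)^2 * (1/(8*(n:ℝ)))^2 = (m:ℝ)^2/(n:ℝ)^2 * (1/64) := by
        field_simp; ring
      rw [h2]
      have h3 : (m:ℝ)^2/(n:ℝ)^2 ≤ 1 := by
        rw [div_le_one (by positivity)]
        exact h1
      nlinarith
    nlinarith [sq_nonneg (m:ℝ), mul_le_mul_of_nonneg_left hQle (sq_nonneg (m:ℝ))]
  have hG := convexOn_aux m hm (1+x.1) (y.1-x.1) (‖x.2‖^2) (inner ℝ x.2 v : ℝ) (‖v‖^2)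
    hc he hcs hu1 hu2 hQb
  apply convexOn_congr' hG
  intro t htI
  -- pointwise equality
  have hupos : 0 < (1+x.1) + (y.1-x.1)*t := by
    have := hu1 t htI; linarith
  have hfst : (x + t•(y-x)).1 = x.1 + t*(y.1-x.1) := by
    simp [Prod.fst_add, Prod.fst_sub, smul_eq_mul]
  have hsnd : (x + t•(y-x)).2 = x.2 + t•v := by
    simp [hv, Prod.snd_add, Prod.snd_sub]
  rw [perimIntegrand, hfst, hsnd]
  set u : ℝ := (1+x.1) + (y.1-x.1)*t with hu_def
  have hu' : 1 + (x.1 + t*(y.1-x.1)) = u := by rw [hu_def]; ring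
  rw [hu']
  set Z : ℝ := ‖x.2 + t•v‖^2 with hZ
  have hZnn : 0 ≤ Z := by rw [hZ]; positivity
  have h1 : 1 + Z/u^2 = (u^2+Z)/u^2 := by field_simp
  rw [h1, Real.sqrt_div (by positivity) (u^2), Real.sqrt_sq hupos.le]
  have hpow : n - 1 = m + 1 := by omega
  rw [show u^(n-1) = u^m * u from by rw [hpow, pow_succ]]
  rw [hQeq t]
  have hune : u ≠ 0 := ne_of_gt hupos
  field_simp
  ring
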